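/- Let k ≥ 2 be an integer. For every family A₁, …, A_k of k deterministic online algorithms for RemKnap and every real number ρ < 4 / (3 − 2k + √(4k(k+1) − 7)), there exists an instance l such that OPT(l) > ρ · max_{1≤j≤k} gain(A_j, l). That is, no online algorithm for the proportional removable knapsack problem reading at most log₂ k advice bits achieves a strict competitive ratio better than 4 / (3 − 2k + √(4k(k+1) − 7)). -/

import Mathlib

/-- An instance of RemKnap: a list of item sizes, each in (0,1]. -/
def ValidInstance (l : List ℝ) : Prop := ∀ s ∈ l, 0 < s ∧ s ≤ 1

/-- A deterministic online algorithm for the removable knapsack problem: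
it assigns to each instance a packing (set of 0-based item indices) that
respects the capacity, and on arrival of a new item it may only remove
previously packed items and add the new item. -/
structure OnlineAlg where
  pack : List ℝ → Finset ℕ
  pack_subset : ∀ l : List ℝ, ValidInstance l → pack l ⊆ Finset.range l.length
  pack_capacity : ∀ l : List ℝ, ValidInstance l → (∑ i ∈ pack l, l.getD i 0) ≤ 1
  pack_online : ∀ (l : List ℝ) (x : ℝ), ValidInstance (l ++ [x]) →
    pack (l ++ [x]) ⊆ pack l ∪ {l.length}

/-- The gain of an online algorithm on an instance: the total size of its final packing. -/
noncomputable def gain (A : OnlineAlg) (l : List ℝ) : ℝ := ∑ i ∈ A.pack l, l.getD i 0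

/-- The optimal (offline) value of an instance: the largest total size of a
subset of the items that does not exceed the capacity 1. -/
noncomputable def OPT (l : List ℝ) : ℝ :=
  ((Finset.range l.length).powerset.filter fun P => (∑ i ∈ P, l.getD i 0) ≤ 1).sup'
    ⟨∅, by simp⟩ (fun P => ∑ i ∈ P, l.getD i 0)

lemma OPT_ge (l : List ℝ) (T : Finset ℕ) (hT : T ⊆ Finset.range l.length)
    (hle : (∑ i ∈ T, l.getD i 0) ≤ 1) : (∑ i ∈ T, l.getD i 0) ≤ OPT l := by
  unfold OPT
  exact Finset.le_sup' (fun P => ∑ i ∈ P, l.getD i 0)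
    (Finset.mem_filter.mpr ⟨Finset.mem_powerset.mpr hT, hle⟩)

set_option maxHeartbeats 1000000 in
lemma remKnap_params (K ρ : ℝ) (hK2 : 2 ≤ K) (hρ1 : 1 ≤ ρ)
    (hΨ : 2*(K-1)*ρ^2 < 2 + (2*K-3)*ρ) :
    ∃ u step L V : ℝ,
      0 < u ∧ 0 < step ∧ L = u + (K-1)*step ∧
      1 < 2*u + step ∧
      ρ*(1-step) < 1 ∧
      ρ*(1-u) < 1 ∧
      ρ*V < 1 ∧
      ρ*L < V ∧
      L < V ∧ V ≤ 1 ∧ 0 < V ∧ L < 1 := by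
  have hρ0 : (0:ℝ) < ρ := by linarith
  have hρ13 : ρ < 13/10 := by
    by_contra hcon
    push_neg at hcon
    have h1 : (0:ℝ) ≤ (K - 2) * (ρ^2 - ρ) := by
      apply mul_nonneg (by linarith)
      nlinarith [mul_nonneg hρ0.le (by linarith : (0:ℝ) ≤ ρ - 1)]
    nlinarith [sq_nonneg (ρ - 13/10)]
  obtain ⟨iρ, hiρdef⟩ : ∃ x : ℝ, x = 1/ρ := ⟨_, rfl⟩
  have hiρ : ρ * iρ = 1 := by rw [hiρdef]; field_simp
  have hiρpos : 0 < iρ := by rw [hiρdef]; positivity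
  have hiρle1 : iρ ≤ 1 := by
    nlinarith [mul_nonneg (by linarith : (0:ℝ) ≤ ρ - 1) hiρpos.le]
  have hiρlb : 10/13 < iρ := by
    nlinarith [mul_pos (by linarith : (0:ℝ) < 13/10 - ρ) hiρpos]
  obtain ⟨g, hgdef⟩ : ∃ x : ℝ, x = 1 - iρ := ⟨_, rfl⟩
  have hg0 : 0 ≤ g := by rw [hgdef]; linarith
  obtain ⟨Φ, hΦdef⟩ : ∃ x : ℝ, x = iρ^2 - iρ/2 - (K-1)*g := ⟨_, rfl⟩
  have hΦid : 2*ρ^2*Φ = 2 + (2*K-3)*ρ - 2*(K-1)*ρ^2 := by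
    rw [hΦdef, hgdef]
    linear_combination (2*ρ*iρ + 2 - ρ + 2*(K-1)*ρ) * hiρ
  have hΦpos : 0 < Φ := by
    by_contra hΦn
    push_neg at hΦn
    have h1 : 2*ρ^2*Φ ≤ 0 :=
      mul_nonpos_of_nonneg_of_nonpos (by positivity) hΦn
    nlinarith
  have hΦhalf : Φ ≤ 1/2 := by
    have h1 : 0 ≤ (K-1)*g := mul_nonneg (by linarith) hg0
    have h2 : iρ^2 ≤ iρ := by
      nlinarith [mul_nonneg (by linarith : (0:ℝ) ≤ 1 - iρ) hiρpos.le]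
    rw [hΦdef]
    nlinarith
  obtain ⟨ε, hε0, hεK⟩ : ∃ ε : ℝ, 0 < ε ∧ 3*K*ε = Φ := by
    have hK0 : (0:ℝ) < 3*K := by linarith
    refine ⟨Φ/(3*K), div_pos hΦpos hK0, ?_⟩
    rw [mul_comm, div_mul_cancel₀ Φ (ne_of_gt hK0)]
  have hεΦ : 3*K*ε = iρ^2 - iρ/2 - (K-1)*(1 - iρ) := by rw [hεK, hΦdef, hgdef]
  have hε12 : ε ≤ 1/12 := by
    have h1 : 0 ≤ (3*K - 6)*ε := mul_nonneg (by linarith) hε0.le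
    nlinarith
  obtain ⟨u, hudef⟩ : ∃ x : ℝ, x = iρ/2 - ε := ⟨_, rfl⟩
  obtain ⟨step, hstepdef⟩ : ∃ x : ℝ, x = g + 3*ε := ⟨_, rfl⟩
  obtain ⟨L, hLdef⟩ : ∃ x : ℝ, x = u + (K-1)*step := ⟨_, rfl⟩
  obtain ⟨V, hVdef⟩ : ∃ x : ℝ, x = (ρ*L + iρ)/2 := ⟨_, rfl⟩
  have hu0 : 0 < u := by rw [hudef]; linarith
  have hstep0 : 0 < step := by rw [hstepdef]; linarith
  have hL0 : 0 < L := by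
    rw [hLdef]
    nlinarith [mul_nonneg (by linarith : (0:ℝ) ≤ K-1) hstep0.le]
  have hkey : iρ - ρ*L = 4*ρ*ε := by
    rw [hLdef, hudef, hstepdef, hgdef]
    linear_combination (-iρ) * hiρ + (-ρ) * hεΦ
  have hρL : ρ*L < iρ := by nlinarith [mul_pos hρ0 hε0]
  have hρLV : ρ*L < V := by rw [hVdef]; linarith
  have hViρ : V < iρ := by rw [hVdef]; linarith
  have hLρL : L ≤ ρ*L :=  by
    nlinarith [mul_nonneg (by linarith : (0:ℝ) ≤ ρ - 1) hL0.le]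
  have hLV : L < V := by linarith
  have hV1 : V ≤ 1 := by linarith
  have hV0 : 0 < V := by linarith
  have hρV : ρ*V < 1 := by
    have h1 : ρ*(ρ*L) < ρ*iρ := mul_lt_mul_of_pos_left hρL hρ0
    have h2 : 2*(ρ*V) = ρ*(ρ*L) + 1 := by
      rw [hVdef]; linear_combination hiρ
    linarith [hiρ ▸ h1]
  have hpair : 1 < 2*u + step := by
    have : 2*u + step = 1 + ε := by rw [hudef, hstepdef, hgdef]; ring
    linarith
  have hρ1step : ρ*(1-step) < 1 := by
    have h2 : ρ*(1-step) = 1 - 3*ρ*ε := by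
      rw [hstepdef, hgdef]; linear_combination hiρ
    nlinarith [mul_pos hρ0 hε0]
  have hρ1u : ρ*(1-u) < 1 := by
    have h1 : ρ*ε ≤ (13/10)*(1/12) :=
      mul_le_mul hρ13.le hε12 hε0.le (by linarith)
    have h2 : ρ*(1-u) = ρ - 1/2 + ρ*ε := by
      rw [hudef]; linear_combination (-(1:ℝ)/2)*hiρ
    linarith
  have hLlt1 : L < 1 := by linarith
  exact ⟨u, step, L, V, hu0, hstep0, hLdef, hpair, hρ1step, hρ1u, hρV, hρLV,
    hLV, hV1, hV0, hLlt1⟩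

set_option maxHeartbeats 1000000 in
/-- No online algorithm for the proportional removable knapsack problem reading
at most `log₂ k` advice bits (i.e. a family of `k` deterministic online algorithms)
achieves a strict competitive ratio better than `4 / (3 - 2k + √(4k(k+1) - 7))`. -/
theorem remKnap_log_k_advice_bits_lower_bound (k : ℕ) (hk : 2 ≤ k) :
    ∀ A : Fin k → OnlineAlg, ∀ ρ : ℝ,
      ρ < 4 / (3 - 2 * (k : ℝ) + Real.sqrt (4 * (k : ℝ) * ((k : ℝ) + 1) - 7)) →
      ∃ l : List ℝ, ValidInstance l ∧
        ρ * (Finset.univ.sup' ⟨⟨0, by omega⟩, Finset.mem_univ _⟩ fun j => gain (A j) l)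
          < OPT l := by
  intro A ρ hρbound
  have hfin : (Finset.univ : Finset (Fin k)).Nonempty := ⟨⟨0, by omega⟩, Finset.mem_univ _⟩
  by_cases hρ1 : ρ < 1
  · -- trivial case : instance [1]
    refine ⟨[1], ?_, ?_⟩
    · intro s hs
      simp only [List.mem_singleton] at hs
      subst hs; constructor <;> norm_num
    · have hval : ValidInstance [1] := by
        intro s hs; simp only [List.mem_singleton] at hs; subst hs
        constructor <;> norm_num
      obtain ⟨j, _, hjeq⟩ := Finset.exists_mem_eq_sup' hfin (fun j => gain (A j) [1])
      have hjeq' : (Finset.univ.sup' ⟨⟨0, by omega⟩, Finset.mem_univ _⟩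
          fun j => gain (A j) [1]) = gain (A j) [1] := hjeq
      rw [hjeq']
      have hOPT : (1:ℝ) ≤ OPT [1] := by
        have hsum : (∑ i ∈ ({0} : Finset ℕ), ([(1:ℝ)]).getD i 0) = 1 := by simp
        have := OPT_ge [1] {0} (by simp) (by rw [hsum])
        rwa [hsum] at this
      have hsub : (A j).pack [1] ⊆ {0} := by
        have := (A j).pack_subset [1] hval
        simpa using this
      unfold gain
      rcases Finset.subset_singleton_iff.mp hsub with h | h
      · rw [h, Finset.sum_empty]
        linarith
      · rw [h]
        simp only [Finset.sum_singleton]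
        norm_num
        linarith
  · -- main case : 1 ≤ ρ
    push_neg at hρ1
    have hK2 : (2:ℝ) ≤ (k:ℝ) := by exact_mod_cast hk
    have hρ0 : (0:ℝ) < ρ := by linarith
    -- from the hypothesis, derive the key quadratic inequality
    have hΨ : 2*((k:ℝ)-1)*ρ^2 < 2 + (2*(k:ℝ)-3)*ρ := by
      have harg : (0:ℝ) ≤ 4 * (k:ℝ) * ((k:ℝ) + 1) - 7 := by nlinarith
      have hS2 : (Real.sqrt (4 * (k:ℝ) * ((k:ℝ) + 1) - 7))^2
          = 4 * (k:ℝ) * ((k:ℝ) + 1) - 7 := Real.sq_sqrt harg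
      have hSnn : 0 ≤ Real.sqrt (4 * (k:ℝ) * ((k:ℝ) + 1) - 7) := Real.sqrt_nonneg _
      have hSgt : 2 * (k:ℝ) - 3 < Real.sqrt (4 * (k:ℝ) * ((k:ℝ) + 1) - 7) := by
        rw [Real.lt_sqrt (by linarith)]
        nlinarith
      have hD : 0 < 3 - 2*(k:ℝ) + Real.sqrt (4 * (k:ℝ) * ((k:ℝ) + 1) - 7) := by linarith
      have hρD : ρ * (3 - 2*(k:ℝ) + Real.sqrt (4 * (k:ℝ) * ((k:ℝ) + 1) - 7)) < 4 := by
        have h := mul_lt_mul_of_pos_right hρbound hD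
        rwa [div_mul_cancel₀ (4:ℝ) (ne_of_gt hD)] at h
      have hρS : ρ * Real.sqrt (4 * (k:ℝ) * ((k:ℝ) + 1) - 7)
          < 4 + (2*(k:ℝ) - 3) * ρ := by nlinarith
      have h1 : 0 ≤ ρ * Real.sqrt (4 * (k:ℝ) * ((k:ℝ) + 1) - 7) := by positivity
      have hsq : (ρ * Real.sqrt (4 * (k:ℝ) * ((k:ℝ) + 1) - 7))^2
          < (4 + (2*(k:ℝ)-3)*ρ)^2 := by nlinarith
      have hSS : (ρ * Real.sqrt (4 * (k:ℝ) * ((k:ℝ) + 1) - 7))^2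
          = ρ^2 * (4*(k:ℝ)*((k:ℝ)+1) - 7) := by rw [mul_pow, hS2]
      nlinarith
    obtain ⟨u, step, L, V, hu0, hstep0, hLdef, hpair, hρ1step, hρ1u, hρV, hρLV,
      hLV, hV1, hV0, hLlt1⟩ := remKnap_params (k:ℝ) ρ hK2 hρ1 hΨ
    -- the items
    obtain ⟨item, hitemdef⟩ : ∃ f : ℕ → ℝ, f = fun s => if s = k then V else u + s * step :=
      ⟨_, rfl⟩
    have hitem_k : item k = V := by rw [hitemdef]; simp
    have hitem_lt : ∀ a, a < k → item a = u + a * step := by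
      intro a ha; rw [hitemdef]; simp [Nat.ne_of_lt ha]
    have hitem_leL : ∀ a, a < k → item a ≤ L := by
      intro a ha
      rw [hitem_lt a ha, hLdef]
      have h1 : (a:ℝ) + 1 ≤ (k:ℝ) := by exact_mod_cast Nat.succ_le_of_lt ha
      nlinarith [mul_nonneg (by linarith : (0:ℝ) ≤ (k:ℝ) - 1 - a) hstep0.le]
    have hitem_pos : ∀ a, a ≤ k → 0 < item a := by
      intro a ha
      rcases eq_or_lt_of_le ha with h | h
      · rw [h, hitem_k]; exact hV0
      · rw [hitem_lt a h]
        have : (0:ℝ) ≤ (a:ℝ) * step := by positivity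
        linarith
    have hitem_le1 : ∀ a, a ≤ k → item a ≤ 1 := by
      intro a ha
      rcases eq_or_lt_of_le ha with h | h
      · rw [h, hitem_k]; exact hV1
      · linarith [hitem_leL a h]
    have hitem_lt1 : ∀ a, a < k → item a < 1 := fun a ha =>
      lt_of_le_of_lt (hitem_leL a ha) hLlt1
    have hmono : ∀ a b, a < b → b ≤ k → item a < item b := by
      intro a b hab hbk
      rcases eq_or_lt_of_le hbk with h | h
      · rw [h] at hab ⊢
        rw [hitem_k]
        exact lt_of_le_of_lt (hitem_leL a hab) hLV
      · rw [hitem_lt a (lt_trans hab h), hitem_lt b h]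
        have h1 : (a:ℝ) < (b:ℝ) := by exact_mod_cast hab
        nlinarith [mul_lt_mul_of_pos_right h1 hstep0]
    have hmono_le : ∀ a b, a ≤ b → b ≤ k → item a ≤ item b := by
      intro a b hab hbk
      rcases eq_or_lt_of_le hab with h | h
      · rw [h]
      · exact (hmono a b h hbk).le
    have hitem0 : item 0 = u := by
      rw [hitem_lt 0 (by omega)]; simp
    have hitem1 : item 1 = u + step := by
      rw [hitem_lt 1 (by omega)]; simp
    have hpair_conflict : ∀ a b, a < b → b ≤ k → 1 < item a + item b := by
      intro a b hab hbk
      have h0 : item 0 ≤ item a := hmono_le 0 a (Nat.zero_le _) (le_trans hab.le hbk)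
      have h1 : item 1 ≤ item b := hmono_le 1 b (by omega) hbk
      rw [hitem0] at h0
      rw [hitem1] at h1
      linarith
    have hgap : ∀ x i, x < i → i < k → item x + (1 - item i) ≤ 1 - step := by
      intro x i hxi hik
      rw [hitem_lt x (lt_trans hxi hik), hitem_lt i hik]
      have h1 : (x:ℝ) + 1 ≤ (i:ℝ) := by exact_mod_cast Nat.succ_le_of_lt hxi
      nlinarith [mul_nonneg (by linarith : (0:ℝ) ≤ (i:ℝ) - (x:ℝ) - 1) hstep0.le]
    -- the main list
    obtain ⟨lm, hlmdef⟩ : ∃ l : List ℝ, l = List.ofFn (fun s : Fin (k+1) => item s.val) :=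
      ⟨_, rfl⟩
    have hlen : lm.length = k + 1 := by rw [hlmdef]; exact List.length_ofFn
    have hgetlm : ∀ i, i ≤ k → lm.getD i 0 = item i := by
      intro i hi
      have h1 : i < lm.length := by omega
      rw [List.getD_eq_getElem _ _ h1]
      simp only [hlmdef]
      rw [List.getElem_ofFn]
    have hvalidlm : ValidInstance lm := by
      intro s hs
      rw [hlmdef, List.mem_ofFn] at hs
      obtain ⟨i, rfl⟩ := hs
      exact ⟨hitem_pos i.val (by omega), hitem_le1 i.val (by omega)⟩
    have hPsub : ∀ j, (A j).pack lm ⊆ Finset.range (k+1) := by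
      intro j
      have := (A j).pack_subset lm hvalidlm
      rwa [hlen] at this
    have hPle : ∀ j, ∀ b ∈ (A j).pack lm, b ≤ k := by
      intro j b hb
      have := hPsub j hb
      rw [Finset.mem_range] at this
      omega
    have hPsingle : ∀ j, ∃ x, x ≤ k ∧ (A j).pack lm ⊆ {x} := by
      intro j
      rcases Finset.eq_empty_or_nonempty ((A j).pack lm) with h | ⟨a, ha⟩
      · exact ⟨0, Nat.zero_le _, by rw [h]; exact Finset.empty_subset _⟩
      · have hak : a ≤ k := hPle j a ha
        refine ⟨a, hak, ?_⟩
        intro b hb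
        have hbk : b ≤ k := hPle j b hb
        rw [Finset.mem_singleton]
        by_contra hne
        have hsub2 : ({a, b} : Finset ℕ) ⊆ (A j).pack lm := by
          intro z hz
          rcases Finset.mem_insert.mp hz with rfl | hz
          · exact ha
          · rw [Finset.mem_singleton] at hz; subst hz; exact hb
        have hsum2 : lm.getD a 0 + lm.getD b 0 ≤ ∑ i ∈ (A j).pack lm, lm.getD i 0 := by
          have h3 : (∑ i ∈ ({a, b} : Finset ℕ), lm.getD i 0)
              ≤ ∑ i ∈ (A j).pack lm, lm.getD i 0 :=
            Finset.sum_le_sum_of_subset_of_nonneg hsub2 (fun i hi _ => by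
              rw [hgetlm i (hPle j i hi)]
              exact (hitem_pos i (hPle j i hi)).le)
          rwa [Finset.sum_pair (fun h => hne h.symm)] at h3
        rw [hgetlm a hak, hgetlm b hbk] at hsum2
        have h1 : 1 < item a + item b := by
          rcases lt_trichotomy a b with h | h | h
          · exact hpair_conflict a b h hbk
          · exact absurd h.symm hne
          · linarith [hpair_conflict b a h hak]
        linarith [(A j).pack_capacity lm hvalidlm]
    by_cases hAB : ∃ i, i < k ∧ ∀ j, i ∉ (A j).pack lm
    · -- some item of index < k is held by nobody : complement ending
      obtain ⟨i, hik, hiun⟩ := hAB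
      have hc0 : 0 < 1 - item i := by linarith [hitem_lt1 i hik]
      have hc1 : 1 - item i ≤ 1 := by linarith [hitem_pos i hik.le]
      have hvalid1 : ValidInstance (lm ++ [1 - item i]) := by
        intro s hs
        rw [List.mem_append] at hs
        rcases hs with hs | hs
        · exact hvalidlm s hs
        · simp only [List.mem_singleton] at hs
          subst hs; exact ⟨hc0, hc1⟩
      have hlen1 : (lm ++ [1 - item i]).length = k + 2 := by
        rw [List.length_append, hlen]; simp
      have hget1 : ∀ i', i' ≤ k → (lm ++ [1 - item i]).getD i' 0 = item i' := by
        intro i' hi'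
        rw [List.getD_append _ _ _ _ (by omega), hgetlm i' hi']
      have hgetc : (lm ++ [1 - item i]).getD (k+1) 0 = 1 - item i := by
        rw [List.getD_append_right _ _ _ _ (by omega), hlen]
        simp
      refine ⟨lm ++ [1 - item i], hvalid1, ?_⟩
      obtain ⟨j, _, hjeq⟩ := Finset.exists_mem_eq_sup' hfin
        (fun j => gain (A j) (lm ++ [1 - item i]))
      have hjeq' : (Finset.univ.sup' ⟨⟨0, by omega⟩, Finset.mem_univ _⟩
          fun j => gain (A j) (lm ++ [1 - item i])) = gain (A j) (lm ++ [1 - item i]) := hjeq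
      rw [hjeq']
      have hOPT : (1:ℝ) ≤ OPT (lm ++ [1 - item i]) := by
        have hsub : ({i, k+1} : Finset ℕ) ⊆ Finset.range (lm ++ [1 - item i]).length := by
          rw [hlen1]
          intro z hz
          rcases Finset.mem_insert.mp hz with rfl | hz
          · rw [Finset.mem_range]; omega
          · rw [Finset.mem_singleton] at hz; subst hz; rw [Finset.mem_range]; omega
        have hsum : (∑ x ∈ ({i, k+1} : Finset ℕ), (lm ++ [1 - item i]).getD x 0) = 1 := by
          rw [Finset.sum_pair (by omega : i ≠ k+1), hget1 i hik.le, hgetc]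
          ring
        have := OPT_ge (lm ++ [1 - item i]) {i, k+1} hsub hsum.le
        rwa [hsum] at this
      refine lt_of_lt_of_le ?_ hOPT
      obtain ⟨x, hxk, hxsub⟩ := hPsingle j
      have honline : (A j).pack (lm ++ [1 - item i]) ⊆ (A j).pack lm ∪ {k+1} := by
        have := (A j).pack_online lm (1 - item i) hvalid1
        rwa [hlen] at this
      have hQsub : (A j).pack (lm ++ [1 - item i]) ⊆ {x, k+1} := by
        intro b hb
        rcases Finset.mem_union.mp (honline hb) with h | h
        · have := hxsub h
          rw [Finset.mem_singleton] at this
          subst this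
          exact Finset.mem_insert_self _ _
        · rw [Finset.mem_singleton] at h
          subst h
          exact Finset.mem_insert_of_mem (Finset.mem_singleton_self _)
      have hcapQ := (A j).pack_capacity (lm ++ [1 - item i]) hvalid1
      unfold gain
      by_cases hx : x ∈ (A j).pack (lm ++ [1 - item i]) <;>
        by_cases hcm : (k+1) ∈ (A j).pack (lm ++ [1 - item i])
      · -- holds both x and the complement
        have hQeq : (A j).pack (lm ++ [1 - item i]) = {x, k+1} := by
          apply Finset.Subset.antisymm hQsub
          intro b hb
          rcases Finset.mem_insert.mp hb with rfl | hb
          · exact hx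
          · rw [Finset.mem_singleton] at hb; subst hb; exact hcm
        rw [hQeq, Finset.sum_pair (by omega : x ≠ k+1), hget1 x hxk, hgetc]
        have hxP : x ∈ (A j).pack lm := by
          rcases Finset.mem_union.mp (honline hx) with h | h
          · exact h
          · rw [Finset.mem_singleton] at h; omega
        have hxi : x ≠ i := fun h => hiun j (h ▸ hxP)
        have hxlti : x < i := by
          rcases lt_trichotomy x i with h | h | h
          · exact h
          · exact absurd h hxi
          · exfalso
            rw [hQeq, Finset.sum_pair (by omega : x ≠ k+1), hget1 x hxk, hgetc] at hcapQ
            have := hmono i x h hxk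
            linarith
        have hb1 : item x + (1 - item i) ≤ 1 - step := hgap x i hxlti hik
        have h2 : ρ * (item x + (1 - item i)) ≤ ρ * (1 - step) :=
          mul_le_mul_of_nonneg_left hb1 hρ0.le
        linarith
      · -- holds only x
        have hQeq : (A j).pack (lm ++ [1 - item i]) = {x} := by
          apply Finset.Subset.antisymm
          · intro b hb
            rcases Finset.mem_insert.mp (hQsub hb) with rfl | hb'
            · exact Finset.mem_singleton_self _
            · rw [Finset.mem_singleton] at hb'; subst hb'; exact absurd hb hcm
          · intro b hb
            rw [Finset.mem_singleton] at hb; subst hb; exact hx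
        rw [hQeq, Finset.sum_singleton, hget1 x hxk]
        have h1 : item x ≤ V := by
          rcases eq_or_lt_of_le hxk with h | h
          · rw [h, hitem_k]
          · linarith [hitem_leL x h]
        have h2 : ρ * item x ≤ ρ * V := mul_le_mul_of_nonneg_left h1 hρ0.le
        linarith
      · -- holds only the complement
        have hQeq : (A j).pack (lm ++ [1 - item i]) = {k+1} := by
          apply Finset.Subset.antisymm
          · intro b hb
            rcases Finset.mem_insert.mp (hQsub hb) with rfl | hb'
            · exact absurd hb hx
            · exact hb'
          · intro b hb
            rw [Finset.mem_singleton] at hb; subst hb; exact hcm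
        rw [hQeq, Finset.sum_singleton, hgetc]
        have h1 : 1 - item i ≤ 1 - u := by
          have := hmono_le 0 i (Nat.zero_le _) hik.le
          rw [hitem0] at this
          linarith
        have h2 : ρ * (1 - item i) ≤ ρ * (1 - u) := mul_le_mul_of_nonneg_left h1 hρ0.le
        linarith
      · -- holds nothing
        have hQeq : (A j).pack (lm ++ [1 - item i]) = ∅ := by
          rw [Finset.eq_empty_iff_forall_notMem]
          intro b hb
          rcases Finset.mem_insert.mp (hQsub hb) with rfl | hb'
          · exact hx hb
          · rw [Finset.mem_singleton] at hb'; subst hb'; exact hcm hb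
        rw [hQeq, Finset.sum_empty, mul_zero]
        norm_num
    · -- every index < k is held by someone : stop ending
      push_neg at hAB
      refine ⟨lm, hvalidlm, ?_⟩
      obtain ⟨j, _, hjeq⟩ := Finset.exists_mem_eq_sup' hfin (fun j => gain (A j) lm)
      have hjeq' : (Finset.univ.sup' ⟨⟨0, by omega⟩, Finset.mem_univ _⟩
          fun j => gain (A j) lm) = gain (A j) lm := hjeq
      rw [hjeq']
      have hOPT : V ≤ OPT lm := by
        have hsub : ({k} : Finset ℕ) ⊆ Finset.range lm.length := by
          rw [hlen]
          intro z hz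
          rw [Finset.mem_singleton] at hz; subst hz
          rw [Finset.mem_range]; omega
        have hsum : (∑ x ∈ ({k} : Finset ℕ), lm.getD x 0) = V := by
          rw [Finset.sum_singleton, hgetlm k le_rfl, hitem_k]
        have := OPT_ge lm {k} hsub (by rw [hsum]; exact hV1)
        rwa [hsum] at this
      refine lt_of_lt_of_le ?_ hOPT
      -- pigeonhole : no algorithm holds the top item k
      have hknotin : ∀ j', k ∉ (A j').pack lm := by
        have hex : ∀ i : Fin k, ∃ j' : Fin k, (i : ℕ) ∈ (A j').pack lm := by
          intro i
          obtain ⟨j', hj'⟩ := hAB i i.isLt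
          exact ⟨j', hj'⟩
        choose F hF using hex
        have hinj : Function.Injective F := by
          intro a b hab
          obtain ⟨x, hxk, hxsub⟩ := hPsingle (F a)
          have h1 := hxsub (hF a)
          have h2 := hxsub (hab ▸ hF b)
          rw [Finset.mem_singleton] at h1 h2
          exact Fin.ext (h1.trans h2.symm)
        have hsurj : Function.Surjective F := Finite.injective_iff_surjective.mp hinj
        intro j' hkj'
        obtain ⟨i, rfl⟩ := hsurj j'
        obtain ⟨x, hxk, hxsub⟩ := hPsingle (F i)
        have h1 := hxsub (hF i)
        have h2 := hxsub hkj'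
        rw [Finset.mem_singleton] at h1 h2
        have : (i : ℕ) = k := h1.trans h2.symm
        omega
      obtain ⟨x, hxk, hxsub⟩ := hPsingle j
      unfold gain
      rcases Finset.subset_singleton_iff.mp hxsub with h | h
      · rw [h, Finset.sum_empty, mul_zero]
        exact hV0
      · rw [h, Finset.sum_singleton]
        have hxmem : x ∈ (A j).pack lm := h ▸ Finset.mem_singleton_self x
        have hxk' : x < k := lt_of_le_of_ne hxk (fun he => hknotin j (he ▸ hxmem))
        rw [hgetlm x hxk]
        have h1 : item x ≤ L := hitem_leL x hxk'
        have h2 : ρ * item x ≤ ρ * L := mul_le_mul_of_nonneg_left h1 hρ0.le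
        linarith
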